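/- Sparse approximation of Mx under columnwise cone structure and a compatibility condition (Lemma D.1(c)): let d ≥ 1, M ∈ ℝ^{d×d}, J ⊆ {1,…,d} nonempty, ϑ ≥ 0 and ϑ_x ≥ 0; suppose every column M_{·,k} (k = 1,…,d) belongs to the cone C₁(J,ϑ), and let x ∈ ℝ^d be a nonzero vector in C₁(J,ϑ_x). Define the compatibility constant κ_min(J,ϑ_x) := inf{√(|J|)·‖(Mu)_J‖₂/‖u_J‖₁ : u ∈ C₁(J,ϑ_x), u_J ≠ 0} and suppose κ_min(J,ϑ_x) > 0. Set K_{J,x} := (1+ϑ_x)·max_{1≤k≤d} √(|J|)·‖M_{J,k}‖₁/κ_min(J,ϑ_x). Then Mx ∈ C₁(J, (1+ϑ)·K_{J,x}), and for every integer s ≥ 1 there exists ℓ̃ ∈ ℝ^d with at most s nonzero coordinates such that ‖ℓ̃ − Mx‖₂ ≤ ((1 + (1+ϑ)·K_{J,x})/2)·√(|J|/s)·‖Mx‖₂. -/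

import Mathlib

open MeasureTheory ProbabilityTheory Filter Finset Asymptotics
open scoped ENNReal NNReal Topology Classical

noncomputable section

/-- Euclidean dot product on `ℝ^m`. -/
def dot {m : ℕ} (u v : Fin m → ℝ) : ℝ := ∑ j, u j * v j

/-- ℓ¹-norm on `ℝ^m`. -/
def l1 {m : ℕ} (v : Fin m → ℝ) : ℝ := ∑ j, |v j|

/-- ℓ²-norm on `ℝ^m`. -/
def l2 {m : ℕ} (v : Fin m → ℝ) : ℝ := Real.sqrt (∑ j, v j ^ 2)

/-- max-norm on `ℝ^m`. -/
def linf {m : ℕ} (v : Fin m → ℝ) : ℝ := ⨆ j, |v j|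

/-- number of nonzero coordinates. -/
def l0 {m : ℕ} (v : Fin m → ℝ) : ℕ := (Finset.univ.filter fun j => v j ≠ 0).card

/-- coordinate restriction of a vector to an index set. -/
def restr {m : ℕ} (S : Finset (Fin m)) (v : Fin m → ℝ) : Fin m → ℝ :=
  fun j => if j ∈ S then v j else 0

/-- cone of dominant coordinates w.r.t. the ℓ¹-norm. -/
def cone1 {m : ℕ} (S : Finset (Fin m)) (t : ℝ) : Set (Fin m → ℝ) :=
  {v | l1 (restr Sᶜ v) ≤ t * l1 (restr S v)}

/-- cone of dominant coordinates w.r.t. the ℓ²-norm. -/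
def cone2 {m : ℕ} (S : Finset (Fin m)) (t : ℝ) : Set (Fin m → ℝ) :=
  {v | l2 (restr Sᶜ v) ≤ t * l2 (restr S v)}

/-- ψ_a-Orlicz norm of a real random variable (with `sInf ∅ = ∞`). -/
def psiNorm {Ω : Type*} [MeasurableSpace Ω] (a : ℝ) (μ : Measure Ω) (Z : Ω → ℝ) : ℝ≥0∞ :=
  sInf {t : ℝ≥0∞ | 0 < t ∧ t ≠ ∞ ∧
    ∫⁻ ω, ENNReal.ofReal (Real.exp (|Z ω| ^ a / t.toReal ^ a)) ∂μ ≤ 2}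

/-- sub-Gaussian random vector with constant `K`. -/
def SubGaussian {Ω : Type*} [MeasurableSpace Ω] {m : ℕ} (μ : Measure Ω)
    (X : Ω → Fin m → ℝ) (K : ℝ) : Prop :=
  ∀ u : Fin m → ℝ,
    psiNorm 2 μ (fun ω => dot u (X ω)) ≤
      ENNReal.ofReal (K * Real.sqrt (∫ ω, dot u (X ω) ^ 2 ∂μ))

/-- `s`-sparse maximum eigenvalue of `E[X Xᵀ]`. -/
def sparseEig {Ω : Type*} [MeasurableSpace Ω] {m : ℕ} (μ : Measure Ω)
    (X : Ω → Fin m → ℝ) (s : ℕ) : ℝ :=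
  sSup {r : ℝ | ∃ u : Fin m → ℝ, l2 u = 1 ∧ l0 u ≤ s ∧ r = ∫ ω, dot (X ω) u ^ 2 ∂μ}

/-- complete-case population gram matrix `E[R X Xᵀ]`. -/
def gramCC {Ω : Type*} [MeasurableSpace Ω] {m : ℕ} (μ : Measure Ω)
    (R : Ω → ℝ) (X : Ω → Fin m → ℝ) : Matrix (Fin m) (Fin m) ℝ :=
  Matrix.of fun j k => ∫ ω, R ω * X ω j * X ω k ∂μ


section AuxSparse

lemma l1_nonneg' {m : ℕ} (v : Fin m → ℝ) : 0 ≤ l1 v :=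
  Finset.sum_nonneg fun _ _ => abs_nonneg _

lemma l2_nonneg' {m : ℕ} (v : Fin m → ℝ) : 0 ≤ l2 v := Real.sqrt_nonneg _

lemma l2_le_l1' {m : ℕ} (v : Fin m → ℝ) : l2 v ≤ l1 v := by
  have h1 : (∑ j, v j ^ 2) = ∑ j, |v j| ^ 2 := by simp [sq_abs]
  have h2 : ∑ j, |v j| ^ 2 ≤ (∑ j, |v j|) ^ 2 :=
    Finset.sum_sq_le_sq_sum_of_nonneg (fun i _ => abs_nonneg _)
  calc l2 v = Real.sqrt (∑ j, |v j| ^ 2) := by rw [l2, h1]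
    _ ≤ Real.sqrt ((∑ j, |v j|) ^ 2) := Real.sqrt_le_sqrt h2
    _ = l1 v := Real.sqrt_sq (l1_nonneg' v)

lemma l1_restr' {m : ℕ} (S : Finset (Fin m)) (v : Fin m → ℝ) :
    l1 (restr S v) = ∑ j ∈ S, |v j| := by
  rw [l1, show S = Finset.univ ∩ S from (Finset.univ_inter _).symm, ← Finset.sum_ite_mem]
  exact Finset.sum_congr rfl fun j _ => by by_cases hj : j ∈ S <;> simp [restr, hj]

lemma l2_restr' {m : ℕ} (S : Finset (Fin m)) (v : Fin m → ℝ) :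
    l2 (restr S v) = Real.sqrt (∑ j ∈ S, v j ^ 2) := by
  rw [l2, show S = Finset.univ ∩ S from (Finset.univ_inter _).symm, ← Finset.sum_ite_mem]
  congr 1
  exact Finset.sum_congr rfl fun j _ => by by_cases hj : j ∈ S <;> simp [restr, hj]

lemma l1_split' {m : ℕ} (S : Finset (Fin m)) (v : Fin m → ℝ) :
    l1 v = l1 (restr S v) + l1 (restr Sᶜ v) := by
  rw [l1_restr', l1_restr', Finset.sum_add_sum_compl, l1]

lemma l1_eq_zero' {m : ℕ} {v : Fin m → ℝ} (h : l1 v = 0) : v = 0 := by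
  funext j
  have := (Finset.sum_eq_zero_iff_of_nonneg (fun i _ => abs_nonneg (v i))).1 h j (Finset.mem_univ j)
  simpa using this

lemma l1_restr_le' {m : ℕ} (S : Finset (Fin m)) (v : Fin m → ℝ) :
    l1 (restr S v) ≤ Real.sqrt (S.card : ℝ) * l2 (restr S v) := by
  rw [l1_restr', l2_restr']
  have h : (∑ j ∈ S, |v j|) ^ 2 ≤ (S.card : ℝ) * ∑ j ∈ S, |v j| ^ 2 :=
    sq_sum_le_card_mul_sum_sq
  have h2 : (∑ j ∈ S, |v j| ^ 2) = ∑ j ∈ S, v j ^ 2 := by simp [sq_abs]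
  calc (∑ j ∈ S, |v j|) = Real.sqrt ((∑ j ∈ S, |v j|) ^ 2) :=
       (Real.sqrt_sq (Finset.sum_nonneg fun _ _ => abs_nonneg _)).symm
    _ ≤ Real.sqrt ((S.card : ℝ) * ∑ j ∈ S, v j ^ 2) := Real.sqrt_le_sqrt (by rw [← h2]; exact h)
    _ = Real.sqrt (S.card : ℝ) * Real.sqrt (∑ j ∈ S, v j ^ 2) := Real.sqrt_mul (by positivity) _

lemma l2_restr_le' {m : ℕ} (S : Finset (Fin m)) (v : Fin m → ℝ) :
    l2 (restr S v) ≤ l2 v := by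
  rw [l2_restr', l2]
  exact Real.sqrt_le_sqrt (Finset.sum_le_sum_of_subset_of_nonneg (Finset.subset_univ S)
    (fun i _ _ => sq_nonneg _))

lemma exists_top' {m : ℕ} (s : ℕ) (hs : s ≤ m) (w : Fin m → ℝ) :
    ∃ S : Finset (Fin m), S.card = s ∧ ∀ i ∈ S, ∀ j ∉ S, w j ≤ w i := by
  induction s with
  | zero => exact ⟨∅, rfl, by simp⟩
  | succ n ih =>
    obtain ⟨S, hScard, hStop⟩ := ih (Nat.le_of_succ_le hs)
    have hne : Sᶜ.Nonempty := by
      rw [← Finset.card_pos, Finset.card_compl, hScard, Fintype.card_fin]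
      omega
    obtain ⟨j, hjmem, hjmax⟩ := Finset.exists_max_image Sᶜ w hne
    have hjS : j ∉ S := Finset.mem_compl.1 hjmem
    refine ⟨insert j S, by rw [Finset.card_insert_of_notMem hjS, hScard], ?_⟩
    intro i hi k hk
    have hkS : k ∉ S := fun h => hk (Finset.mem_insert_of_mem h)
    rcases Finset.mem_insert.1 hi with rfl | hiS
    · exact hjmax k (Finset.mem_compl.2 hkS)
    · exact hStop i hiS k hkS

lemma sparse_tail' {m s : ℕ} (hs : 1 ≤ s) (v : Fin m → ℝ) :
    ∃ w : Fin m → ℝ, l0 w ≤ s ∧ l2 (fun j => w j - v j) ≤ l1 v / (2 * Real.sqrt s) := by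
  have hspos : (0:ℝ) < (s:ℝ) := by exact_mod_cast hs
  have hsqs : (0:ℝ) < Real.sqrt s := Real.sqrt_pos.2 hspos
  by_cases hms : m ≤ s
  · refine ⟨v, ?_, ?_⟩
    · calc l0 v ≤ (Finset.univ : Finset (Fin m)).card := Finset.card_filter_le _ _
        _ = m := by simp
        _ ≤ s := hms
    · have : l2 (fun j => v j - v j) = 0 := by simp [l2]
      rw [this]
      exact div_nonneg (l1_nonneg' v) (by positivity)
  · push_neg at hms
    obtain ⟨S, hScard, hStop⟩ := exists_top' s hms.le (fun j => |v j|)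
    refine ⟨restr S v, ?_, ?_⟩
    · rw [← hScard]
      apply Finset.card_le_card
      intro j hj
      simp only [Finset.mem_filter, Finset.mem_univ, true_and] at hj
      by_contra hjS
      exact hj (by simp [restr, hjS])
    · have hSne : S.Nonempty := Finset.card_pos.1 (by omega)
      obtain ⟨i0, hi0S, hi0min⟩ := Finset.exists_min_image S (fun i => |v i|) hSne
      set α := |v i0| with hα
      have hα0 : 0 ≤ α := abs_nonneg _
      set T := l1 v with hT
      have hT0 : 0 ≤ T := l1_nonneg' v
      have hA : (s : ℝ) * α ≤ ∑ i ∈ S, |v i| := by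
        calc (s:ℝ) * α = S.card • α := by rw [hScard, nsmul_eq_mul]
          _ ≤ ∑ i ∈ S, |v i| := Finset.card_nsmul_le_sum S _ _ (fun i hi => hi0min i hi)
      have hB : (∑ j ∈ Sᶜ, |v j|) = T - ∑ i ∈ S, |v i| := by
        rw [hT, l1, ← Finset.sum_add_sum_compl S (fun j => |v j|)]; ring
      have htail : (∑ j ∈ Sᶜ, v j ^ 2) ≤ T ^ 2 / (4 * s) := by
        have h1 : (∑ j ∈ Sᶜ, v j ^ 2) ≤ α * ∑ j ∈ Sᶜ, |v j| := by
          rw [Finset.mul_sum]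
          apply Finset.sum_le_sum
          intro j hj
          have hjle : |v j| ≤ α := hStop i0 hi0S j (Finset.mem_compl.1 hj)
          calc v j ^ 2 = |v j| * |v j| := by rw [← sq_abs]; ring
            _ ≤ α * |v j| := mul_le_mul_of_nonneg_right hjle (abs_nonneg _)
        have h2 : α * (∑ j ∈ Sᶜ, |v j|) ≤ α * (T - s * α) := by
          apply mul_le_mul_of_nonneg_left _ hα0
          rw [hB]; linarith
        have h3 : α * (T - s * α) ≤ T ^ 2 / (4 * s) := by
          rw [le_div_iff₀ (by positivity)]
          nlinarith [sq_nonneg (T - 2 * (s:ℝ) * α)]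
        linarith
      have hdiff : (fun j => restr S v j - v j) = fun j => - restr Sᶜ v j := by
        funext j
        by_cases hj : j ∈ S <;> simp [restr, hj, Finset.mem_compl]
      rw [hdiff]
      have hl2neg : l2 (fun j => - restr Sᶜ v j) = l2 (restr Sᶜ v) := by
        simp [l2, neg_pow]
      rw [hl2neg, l2_restr']
      calc Real.sqrt (∑ j ∈ Sᶜ, v j ^ 2) ≤ Real.sqrt (T ^ 2 / (4 * s)) := Real.sqrt_le_sqrt htail
        _ = T / (2 * Real.sqrt s) := by
            rw [Real.sqrt_div (sq_nonneg T), Real.sqrt_sq hT0,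
              show (4:ℝ) * s = 2^2 * s by norm_num,
              Real.sqrt_mul (by positivity), Real.sqrt_sq (by norm_num : (0:ℝ) ≤ 2)]

end AuxSparse

/-- sparse approximation of `Mx` under columnwise cone structure and a
compatibility condition. -/
theorem sparse_approx_compatibility
    (d : ℕ) (hd : 1 ≤ d) (M : Matrix (Fin d) (Fin d) ℝ)
    (J : Finset (Fin d)) (hJ : J.Nonempty) (ϑ ϑx : ℝ) (hϑ : 0 ≤ ϑ) (hϑx : 0 ≤ ϑx)
    (hcols : ∀ k, (fun j => M j k) ∈ cone1 J ϑ)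
    (x : Fin d → ℝ) (hx : x ≠ 0) (hxcone : x ∈ cone1 J ϑx)
    (κmin : ℝ)
    (hκ : κmin = sInf {c : ℝ | ∃ u ∈ cone1 J ϑx, restr J u ≠ 0 ∧
        c = Real.sqrt (J.card : ℝ) * l2 (restr J (M.mulVec u)) / l1 (restr J u)})
    (hκpos : 0 < κmin)
    (KJx : ℝ)
    (hK : KJx = (1 + ϑx) * sSup (Set.range fun k : Fin d =>
        Real.sqrt (J.card : ℝ) * (∑ j ∈ J, |M j k|) / κmin)) :
    M.mulVec x ∈ cone1 J ((1 + ϑ) * KJx) ∧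
    ∀ s : ℕ, 1 ≤ s → ∃ ℓt : Fin d → ℝ, l0 ℓt ≤ s ∧
      l2 (fun j => ℓt j - M.mulVec x j)
        ≤ ((1 + (1 + ϑ) * KJx) / 2) * Real.sqrt ((J.card : ℝ) / (s : ℝ)) * l2 (M.mulVec x) := by
    classical
  simp only [cone1, Set.mem_setOf_eq] at hxcone
  set v := M.mulVec x with hv
  have hJcard : (0:ℝ) < (J.card : ℝ) := by exact_mod_cast Finset.card_pos.2 hJ
  have hsJ : (0:ℝ) < Real.sqrt (J.card : ℝ) := Real.sqrt_pos.2 hJcard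
  -- x has nonzero restriction to J
  have hxJ : restr J x ≠ 0 := by
    intro h0
    apply hx
    have h1 : l1 (restr J x) = 0 := by rw [h0]; simp [l1]
    have h2 : l1 (restr Jᶜ x) = 0 := le_antisymm (by
      calc l1 (restr Jᶜ x) ≤ ϑx * l1 (restr J x) := hxcone
        _ = 0 := by rw [h1, mul_zero]) (l1_nonneg' _)
    have h3 := l1_eq_zero' h2
    have h4 := l1_eq_zero' h1
    funext j
    by_cases hj : j ∈ J
    · have := congrFun h4 j; simpa [restr, hj] using this
    · have := congrFun h3 j; simpa [restr, Finset.mem_compl, hj] using this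
  have hD : 0 < l1 (restr J x) :=
    lt_of_le_of_ne (l1_nonneg' _) (fun h => hxJ (l1_eq_zero' h.symm))
  -- compatibility bound
  have hκle : κmin ≤ Real.sqrt (J.card : ℝ) * l2 (restr J v) / l1 (restr J x) := by
    rw [hκ]
    apply csInf_le
    · refine ⟨0, fun c hc => ?_⟩
      obtain ⟨u, _, _, rfl⟩ := hc
      exact div_nonneg (mul_nonneg (Real.sqrt_nonneg _) (l2_nonneg' _)) (l1_nonneg' _)
    · exact ⟨x, hxcone, hxJ, rfl⟩
  have hDle : l1 (restr J x) ≤ Real.sqrt (J.card : ℝ) * l2 (restr J v) / κmin := by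
    rw [le_div_iff₀ hD] at hκle
    rw [le_div_iff₀ hκpos]
    nlinarith [hκle]
  -- the sSup and its properties
  set C := sSup (Set.range fun k : Fin d =>
      Real.sqrt (J.card : ℝ) * (∑ j ∈ J, |M j k|) / κmin) with hCdef
  have hBdd : BddAbove (Set.range fun k : Fin d =>
      Real.sqrt (J.card : ℝ) * (∑ j ∈ J, |M j k|) / κmin) := (Set.finite_range _).bddAbove
  have hCk : ∀ k, Real.sqrt (J.card : ℝ) * (∑ j ∈ J, |M j k|) / κmin ≤ C :=
    fun k => le_csSup hBdd ⟨k, rfl⟩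
  have hC0 : 0 ≤ C := by
    refine le_trans ?_ (hCk ⟨0, hd⟩)
    exact div_nonneg (mul_nonneg hsJ.le (Finset.sum_nonneg fun _ _ => abs_nonneg _)) hκpos.le
  have hK0 : 0 ≤ KJx := by
    rw [hK]
    exact mul_nonneg (by linarith) hC0
  have hck : ∀ k, (∑ j ∈ J, |M j k|) ≤ C * κmin / Real.sqrt (J.card : ℝ) := by
    intro k
    rw [le_div_iff₀ hsJ]
    have h := hCk k
    rw [div_le_iff₀ hκpos] at h
    nlinarith [h]
  have hcol : ∀ k, (∑ j ∈ Jᶜ, |M j k|) ≤ ϑ * ∑ j ∈ J, |M j k| := by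
    intro k
    have h := hcols k
    simp only [cone1, Set.mem_setOf_eq, l1_restr'] at h
    exact h
  -- bound the off-support mass of v
  have hoff : l1 (restr Jᶜ v) ≤ ϑ * (C * κmin / Real.sqrt (J.card : ℝ)) * l1 x := by
    rw [l1_restr']
    calc (∑ j ∈ Jᶜ, |v j|) = ∑ j ∈ Jᶜ, |∑ k, M j k * x k| := by
          refine Finset.sum_congr rfl fun j _ => ?_
          simp [hv, Matrix.mulVec, dotProduct]
      _ ≤ ∑ j ∈ Jᶜ, ∑ k, |M j k * x k| :=
          Finset.sum_le_sum fun j _ => Finset.abs_sum_le_sum_abs _ _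
      _ = ∑ k, (∑ j ∈ Jᶜ, |M j k|) * |x k| := by
          rw [Finset.sum_comm]
          exact Finset.sum_congr rfl fun k _ => by rw [Finset.sum_mul]; simp [abs_mul]
      _ ≤ ∑ k, (ϑ * (C * κmin / Real.sqrt (J.card : ℝ))) * |x k| := by
          refine Finset.sum_le_sum fun k _ => mul_le_mul_of_nonneg_right ?_ (abs_nonneg _)
          exact le_trans (hcol k) (mul_le_mul_of_nonneg_left (hck k) hϑ)
      _ = ϑ * (C * κmin / Real.sqrt (J.card : ℝ)) * l1 x := by
          rw [← Finset.mul_sum, l1]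
  have hxl1 : l1 x ≤ (1 + ϑx) * (Real.sqrt (J.card : ℝ) * l2 (restr J v) / κmin) := by
    calc l1 x = l1 (restr J x) + l1 (restr Jᶜ x) := l1_split' J x
      _ ≤ (1 + ϑx) * l1 (restr J x) := by nlinarith [hxcone, hD]
      _ ≤ (1 + ϑx) * (Real.sqrt (J.card : ℝ) * l2 (restr J v) / κmin) :=
          mul_le_mul_of_nonneg_left hDle (by linarith)
  have hconemem : v ∈ cone1 J ((1 + ϑ) * KJx) := by
    show l1 (restr Jᶜ v) ≤ (1 + ϑ) * KJx * l1 (restr J v)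
    have hfac0 : 0 ≤ ϑ * (C * κmin / Real.sqrt (J.card : ℝ)) :=
      mul_nonneg hϑ (div_nonneg (mul_nonneg hC0 hκpos.le) hsJ.le)
    have h1 : l1 (restr Jᶜ v) ≤ ϑ * (C * κmin / Real.sqrt (J.card : ℝ)) *
        ((1 + ϑx) * (Real.sqrt (J.card : ℝ) * l2 (restr J v) / κmin)) := by
      calc l1 (restr Jᶜ v) ≤ ϑ * (C * κmin / Real.sqrt (J.card : ℝ)) * l1 x := hoff
        _ ≤ _ := mul_le_mul_of_nonneg_left hxl1 hfac0
    have heq : ϑ * (C * κmin / Real.sqrt (J.card : ℝ)) *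
        ((1 + ϑx) * (Real.sqrt (J.card : ℝ) * l2 (restr J v) / κmin))
        = ϑ * KJx * l2 (restr J v) := by
      rw [hK]
      field_simp
    have h2 : ϑ * KJx * l2 (restr J v) ≤ (1 + ϑ) * KJx * l1 (restr J v) := by
      have hle := l2_le_l1' (restr J v)
      have hn := l2_nonneg' (restr J v)
      nlinarith [mul_nonneg hK0 hn, mul_le_mul_of_nonneg_left hle hK0,
        mul_nonneg (mul_nonneg hϑ hK0) (sub_nonneg.2 hle)]
    calc l1 (restr Jᶜ v) ≤ ϑ * KJx * l2 (restr J v) := heq ▸ h1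
      _ ≤ (1 + ϑ) * KJx * l1 (restr J v) := h2
  refine ⟨hconemem, ?_⟩
  intro s hs
  obtain ⟨w, hw0, hw2⟩ := sparse_tail' hs v
  refine ⟨w, hw0, ?_⟩
  have hθ0 : 0 ≤ (1 + ϑ) * KJx := mul_nonneg (by linarith) hK0
  have hvl1 : l1 v ≤ (1 + (1 + ϑ) * KJx) * (Real.sqrt (J.card : ℝ) * l2 v) := by
    have hc : l1 (restr Jᶜ v) ≤ (1 + ϑ) * KJx * l1 (restr J v) := hconemem
    calc l1 v = l1 (restr J v) + l1 (restr Jᶜ v) := l1_split' J v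
      _ ≤ (1 + (1 + ϑ) * KJx) * l1 (restr J v) := by nlinarith
      _ ≤ (1 + (1 + ϑ) * KJx) * (Real.sqrt (J.card : ℝ) * l2 (restr J v)) :=
          mul_le_mul_of_nonneg_left (l1_restr_le' J v) (by linarith)
      _ ≤ (1 + (1 + ϑ) * KJx) * (Real.sqrt (J.card : ℝ) * l2 v) := by
          refine mul_le_mul_of_nonneg_left ?_ (by linarith)
          exact mul_le_mul_of_nonneg_left (l2_restr_le' J v) hsJ.le
  have hspos : (0:ℝ) < (s:ℝ) := by exact_mod_cast hs
  have hsqs : (0:ℝ) < Real.sqrt s := Real.sqrt_pos.2 hspos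
  calc l2 (fun j => w j - v j) ≤ l1 v / (2 * Real.sqrt s) := hw2
    _ ≤ ((1 + (1 + ϑ) * KJx) * (Real.sqrt (J.card : ℝ) * l2 v)) / (2 * Real.sqrt s) := by
        gcongr
    _ = ((1 + (1 + ϑ) * KJx) / 2) * Real.sqrt ((J.card : ℝ) / (s : ℝ)) * l2 v := by
        rw [Real.sqrt_div hJcard.le]
        field_simp
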